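/- Let Π be a connected resolution refutation of τ with x ∈ var(Π), and let Π' be the downward closure of any occurrence of the empty clause in the restricted refutation Π|_{x=a}. Then τ contains a clause containing the literal x^{1−a}. -/
import Mathlib


abbrev Var := ℕ
abbrev Lit := Var × Bool
abbrev Clause := Finset Lit

def Clause.vars (C : Clause) : Finset Var := C.image Prod.fst

abbrev Assignment := Var → Option Bool

def litSat (σ : Assignment) (l : Lit) : Prop := σ l.1 = some l.2
def litFalse (σ : Assignment) (l : Lit) : Prop := σ l.1 = some (!l.2)

def Clause.falsified (σ : Assignment) (C : Clause) : Prop := ∀ l ∈ C, litFalse σ l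

def resolve (x : Var) (C D : Clause) : Clause :=
  C.filter (fun l => l.1 ≠ x) ∪ D.filter (fun l => l.1 ≠ x)

def resolvableOn (x : Var) (C D : Clause) : Prop :=
  (∃ a : Bool, (x, a) ∈ C ∧ (x, !a) ∈ D) ∧
    ∀ (y : Var) (b : Bool), y ≠ x → (y, b) ∈ C → (y, !b) ∉ D
structure ResDag (V : Type) where
  clause : V → Clause
  prem : V → Option (V × V × Var)
  res_ok : ∀ (v : V) (p : V × V × Var), prem v = some p →
    (∃ a : Bool, (p.2.2, a) ∈ clause p.1 ∧ (p.2.2, !a) ∈ clause p.2.1) ∧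
      clause v = resolve p.2.2 (clause p.1) (clause p.2.1)
  wf : WellFounded (fun u v : V =>
    ∃ p : V × V × Var, prem v = some p ∧ (u = p.1 ∨ u = p.2.1))

def ResDag.parent {V : Type} (G : ResDag V) (u v : V) : Prop :=
  ∃ p : V × V × Var, G.prem v = some p ∧ (u = p.1 ∨ u = p.2.1)

def ResDag.reach {V : Type} (G : ResDag V) : V → V → Prop :=
  Relation.ReflTransGen (ResDag.parent G)

def delS (S : Finset Var) (C : Clause) : Clause := C.filter (fun l => l.1 ∉ S)


private lemma res_opp {V : Type} (G : ResDag V) (root : V)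
    (hroot : G.clause root = ∅) (x : Var) (b : Bool) :
    ∀ v : V, Relation.ReflTransGen (ResDag.parent G) v root →
      (x, b) ∈ G.clause v → ∃ w : V, (x, !b) ∈ G.clause w := by
  intro v hreach
  induction hreach using Relation.ReflTransGen.head_induction_on with
  | refl => intro hl; rw [hroot] at hl; exact absurd hl (Finset.notMem_empty _)
  | @head c d hpar hrest ih =>
    intro hl
    obtain ⟨p, hp, hcd⟩ := hpar
    have hres := G.res_ok d p hp
    by_cases hyx : p.2.2 = x
    · obtain ⟨e, he1, he2⟩ := hres.1
      rw [hyx] at he1 he2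
      by_cases heb : e = b
      · exact ⟨p.2.1, heb ▸ he2⟩
      · have : e = !b := by cases b <;> cases e <;> simp_all
        exact ⟨p.1, this ▸ he1⟩
    · have hd : (x, b) ∈ G.clause d := by
        rw [hres.2, resolve, Finset.mem_union]
        rcases hcd with rfl | rfl
        · exact Or.inl (Finset.mem_filter.mpr ⟨hl, fun h => hyx h.symm⟩)
        · exact Or.inr (Finset.mem_filter.mpr ⟨hl, fun h => hyx h.symm⟩)
      exact ih hd

theorem stmt_9 {V : Type} [Fintype V] (G : ResDag V) (root : V)
    (hroot : G.clause root = ∅) (hconn : ∀ v : V, ResDag.reach G v root)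
    (τ : Set Clause) (hax : ∀ v : V, G.prem v = none → G.clause v ∈ τ)
    (x : Var) (hx : ∃ v : V, x ∈ Clause.vars (G.clause v)) (a : Bool) :
    ∃ C ∈ τ, (x, !a) ∈ C := by
  have toAxiom : ∀ (l : Lit) (v : V), l ∈ G.clause v →
      ∃ u, G.prem u = none ∧ l ∈ G.clause u := by
    intro l v
    induction v using G.wf.induction with
    | _ v ih =>
      intro hl
      cases h : G.prem v with
      | none => exact ⟨v, h, hl⟩
      | some p =>
        have heq := (G.res_ok v p h).2
        rw [heq, resolve, Finset.mem_union] at hl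
        rcases hl with h1 | h1
        · exact ih p.1 ⟨p, h, Or.inl rfl⟩ (Finset.mem_filter.mp h1).1
        · exact ih p.2.1 ⟨p, h, Or.inr rfl⟩ (Finset.mem_filter.mp h1).1
  have key : ∃ w : V, (x, !a) ∈ G.clause w := by
    obtain ⟨v, hv⟩ := hx
    rw [Clause.vars, Finset.mem_image] at hv
    obtain ⟨⟨y, b⟩, hl, hl1⟩ := hv
    simp only at hl1
    subst hl1
    by_cases hb : b = !a
    · exact ⟨v, hb ▸ hl⟩
    · have hba : b = a := by cases a <;> cases b <;> simp_all
      subst hba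
      exact res_opp G root hroot y b v (hconn v) hl
  obtain ⟨w, hw⟩ := key
  obtain ⟨u, hu1, hu2⟩ := toAxiom (x, !a) w hw
  exact ⟨G.clause u, hax u hu1, hu2⟩
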